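/- Let a, b > 0 and let f : (0,1] → [0,∞) satisfy f(1) < ∞ and f(r) ≤ a (r/ρ)² f(ρ) + b (ρ/r)^{13/8} (1 + f(ρ)^{2/3}) for all 0 < r < ρ ≤ 1. Then sup_{0<r≤1} f(r) < ∞, with a bound depending only on a, b, and f(1). -/

import Mathlib

open Set Real

lemma sub_two_thirds (ε x : ℝ) (hε : 0 < ε) (hx : 0 ≤ x) :
    x ^ ((2:ℝ)/3) ≤ ε * x + (ε⁻¹)^2 := by
  have hεi : (0:ℝ) < ε⁻¹ := inv_pos.mpr hε
  rcases le_or_gt x (ε⁻¹^3) with h | h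
  · have h1 : x ^ ((2:ℝ)/3) ≤ (ε⁻¹^3) ^ ((2:ℝ)/3) :=
      Real.rpow_le_rpow hx h (by norm_num)
    have h2 : (ε⁻¹^3 : ℝ) ^ ((2:ℝ)/3) = ε⁻¹^2 := by
      rw [← Real.rpow_natCast ε⁻¹ 3, ← Real.rpow_mul hεi.le,
        ← Real.rpow_natCast ε⁻¹ 2]
      norm_num
    have h3 : 0 ≤ ε * x := mul_nonneg hε.le hx
    linarith [h2 ▸ h1]
  · have hx0 : 0 < x := lt_trans (by positivity) h
    have h1 : x ^ ((2:ℝ)/3) = x * x ^ (-(1:ℝ)/3) := by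
      rw [show (2:ℝ)/3 = 1 + (-(1:ℝ)/3) by norm_num, Real.rpow_add hx0,
        Real.rpow_one]
    have h2 : x ^ (-(1:ℝ)/3) ≤ (ε⁻¹^3) ^ (-(1:ℝ)/3) :=
      Real.rpow_le_rpow_of_nonpos (by positivity) h.le (by norm_num)
    have h3 : (ε⁻¹^3 : ℝ) ^ (-(1:ℝ)/3) = ε := by
      rw [← Real.rpow_natCast ε⁻¹ 3, ← Real.rpow_mul hεi.le,
        show ((3:ℕ):ℝ) * (-1/3) = -1 by norm_num, Real.rpow_neg_one, inv_inv]
    have h4 : x * x ^ (-(1:ℝ)/3) ≤ x * ε :=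
      mul_le_mul_of_nonneg_left (h3 ▸ h2) hx0.le
    nlinarith [sq_nonneg ε⁻¹]

/-- boundedness from a two-scale inequality with a sublinear term.
If `f : (0,1] → [0,∞)` satisfies `f(1) < ∞` and
`f(r) ≤ a (r/ρ)^2 f(ρ) + b (ρ/r)^{13/8} (1 + f(ρ)^{2/3})` for all `0 < r < ρ ≤ 1`,
then `sup_{0<r≤1} f(r) < ∞`, with a bound depending only on `a`, `b` and `f(1)`. -/
theorem boundedness_from_two_scale
    (a b K : ℝ) (ha : 0 < a) (hb : 0 < b) :
    ∃ M : ℝ, ∀ (f : ℝ → ℝ),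
      (∀ r ∈ Set.Ioc (0:ℝ) 1, 0 ≤ f r) →
      f 1 ≤ K →
      (∀ r ρ : ℝ, 0 < r → r < ρ → ρ ≤ 1 →
        f r ≤ a * (r/ρ)^2 * f ρ + b * (ρ/r) ^ ((13:ℝ)/8) * (1 + f ρ ^ ((2:ℝ)/3))) →
      ∀ r ∈ Set.Ioc (0:ℝ) 1, f r ≤ M := by
  set θ : ℝ := min (1/2) (1/(2*a)) with hθdef
  have hθ0 : 0 < θ := lt_min (by norm_num) (by positivity)
  have hθ1 : θ < 1 := lt_of_le_of_lt (min_le_left _ _) (by norm_num)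
  have haθ : a * θ^2 ≤ 1/2 := by
    have h1 : θ ≤ 1/(2*a) := min_le_right _ _
    have h2 : θ ≤ 1 := hθ1.le
    have h3 : a * θ ≤ 1/2 := by
      rw [le_div_iff₀ (by positivity)] at h1
      nlinarith
    nlinarith
  set C : ℝ := b * θ⁻¹ ^ ((13:ℝ)/8) with hCdef
  have hC0 : 0 < C := by
    have : (0:ℝ) < θ⁻¹ ^ ((13:ℝ)/8) := Real.rpow_pos_of_pos (by positivity) _
    positivity
  set D : ℝ := 4 * C with hDdef
  have hD0 : 0 < D := by positivity
  set B : ℝ := max (max K 0) (D * (1 + D^2)) with hBdef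
  have hB0 : 0 ≤ B := le_trans (le_max_right K 0) (le_max_left _ _)
  have hKB : K ≤ B := le_trans (le_max_left K 0) (le_max_left _ _)
  have hDB : D * (1 + D^2) ≤ B := le_max_right _ _
  refine ⟨max B (a * B + C * (1 + B ^ ((2:ℝ)/3))), ?_⟩
  intro f hf0 hfK hf r hr
  -- the geometric sequence is bounded by B
  have hθpow : ∀ n : ℕ, θ ^ n ∈ Set.Ioc (0:ℝ) 1 :=
    fun n => ⟨pow_pos hθ0 n, pow_le_one₀ hθ0.le hθ1.le⟩
  have hseq : ∀ n : ℕ, f (θ ^ n) ≤ B := by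
    intro n
    induction n with
    | zero => simpa using le_trans hfK hKB
    | succ n ih =>
      have hlt : θ ^ (n+1) < θ ^ n := by
        have := pow_lt_pow_right_of_lt_one₀ hθ0 hθ1 (Nat.lt_succ_self n)
        exact this
      have h := hf (θ ^ (n+1)) (θ ^ n) (pow_pos hθ0 _) hlt (hθpow n).2
      have hrat1 : θ ^ (n+1) / θ ^ n = θ := by
        rw [pow_succ]; field_simp
      have hrat2 : θ ^ n / θ ^ (n+1) = θ⁻¹ := by
        rw [pow_succ, div_mul_eq_div_div, div_self (pow_ne_zero n hθ0.ne'),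
          one_div]
      rw [hrat1, hrat2] at h
      set g : ℝ := f (θ ^ n) with hgdef
      have hg0 : 0 ≤ g := hf0 _ (hθpow n)
      have hsub : g ^ ((2:ℝ)/3) ≤ D⁻¹ * g + D^2 := by
        have := sub_two_thirds D⁻¹ g (by positivity) hg0
        simpa [inv_inv] using this
      have h5 : a * θ^2 * g ≤ (1/2) * g := mul_le_mul_of_nonneg_right haθ hg0
      have h6 : C * (1 + g ^ ((2:ℝ)/3)) ≤ C * (1 + (D⁻¹ * g + D^2)) := by
        apply mul_le_mul_of_nonneg_left _ hC0.le
        linarith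
      have h7 : C * D⁻¹ = 1/4 := by
        rw [hDdef]; field_simp
      have h8 : C * (D⁻¹ * g) = (1/4) * g := by rw [← mul_assoc, h7]
      have h9 : D * (1 + D^2) = 4*C + 4*C*D^2 := by rw [hDdef]; ring
      nlinarith [mul_nonneg hC0.le hg0]
  rcases eq_or_lt_of_le hr.2 with h1 | h1
  · -- r = 1
    have : f r ≤ B := by rw [h1]; exact le_trans hfK hKB
    exact le_trans this (le_max_left _ _)
  · -- r < 1 : find the scale
    have hex : ∃ n : ℕ, θ ^ n < r := exists_pow_lt_of_lt_one hr.1 hθ1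
    obtain ⟨n, hn, hmin⟩ : ∃ n : ℕ, θ ^ n < r ∧ ∀ m < n, r ≤ θ ^ m :=
      ⟨Nat.find hex, Nat.find_spec hex,
        fun m hm => not_lt.mp (Nat.find_min hex hm)⟩
    obtain ⟨m, rfl⟩ : ∃ m, n = m + 1 := by
      rcases n with _ | m
      · rw [pow_zero] at hn
        exact absurd hn (not_lt.mpr hr.2)
      · exact ⟨m, rfl⟩
    have hm : r ≤ θ ^ m := hmin m (Nat.lt_succ_self m)
    rcases eq_or_lt_of_le hm with h2 | h2
    · have : f r ≤ B := h2 ▸ hseq m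
      exact le_trans this (le_max_left _ _)
    · have h := hf r (θ ^ m) hr.1 h2 (hθpow m).2
      set g : ℝ := f (θ ^ m) with hgdef
      have hg0 : 0 ≤ g := hf0 _ (hθpow m)
      have hgB : g ≤ B := hseq m
      have hq1 : (r / θ ^ m)^2 ≤ 1 := by
        have h3 : r / θ ^ m ≤ 1 := by
          rw [div_le_one (pow_pos hθ0 m)]; exact h2.le
        have h4 : 0 ≤ r / θ ^ m := div_nonneg hr.1.le (pow_nonneg hθ0.le m)
        nlinarith
      have hq2 : θ ^ m / r ≤ θ⁻¹ := by
        rw [div_le_iff₀ hr.1]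
        have h5 : θ ^ (m+1) ≤ r := hn.le
        rw [pow_succ] at h5
        have := mul_le_mul_of_nonneg_left h5 (inv_nonneg.mpr hθ0.le)
        calc θ ^ m = θ⁻¹ * (θ ^ m * θ) := by field_simp
        _ ≤ θ⁻¹ * r := this
      have hb1 : a * (r / θ ^ m)^2 * g ≤ a * B := by
        have h5 : (r / θ ^ m)^2 * g ≤ 1 * g := mul_le_mul_of_nonneg_right hq1 hg0
        rw [one_mul] at h5
        calc a * (r / θ ^ m)^2 * g = a * ((r / θ ^ m)^2 * g) := by ring
        _ ≤ a * B := mul_le_mul_of_nonneg_left (le_trans h5 hgB) ha.le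
      have hb2 : b * (θ ^ m / r) ^ ((13:ℝ)/8) * (1 + g ^ ((2:ℝ)/3))
          ≤ C * (1 + B ^ ((2:ℝ)/3)) := by
        have hdn : (0:ℝ) ≤ θ ^ m / r := div_nonneg (pow_nonneg hθ0.le m) hr.1.le
        have hr1 : (θ ^ m / r) ^ ((13:ℝ)/8) ≤ θ⁻¹ ^ ((13:ℝ)/8) :=
          Real.rpow_le_rpow hdn hq2 (by norm_num)
        have hr2 : g ^ ((2:ℝ)/3) ≤ B ^ ((2:ℝ)/3) :=
          Real.rpow_le_rpow hg0 hgB (by norm_num)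
        have hr3 : (0:ℝ) ≤ (θ ^ m / r) ^ ((13:ℝ)/8) :=
          Real.rpow_nonneg hdn _
        have hr4 : (0:ℝ) ≤ 1 + g ^ ((2:ℝ)/3) := by
          have := Real.rpow_nonneg hg0 ((2:ℝ)/3); linarith
        have hr5 : b * (θ ^ m / r) ^ ((13:ℝ)/8) ≤ b * θ⁻¹ ^ ((13:ℝ)/8) :=
          mul_le_mul_of_nonneg_left hr1 hb.le
        have hr6 : (0:ℝ) ≤ b * (θ ^ m / r) ^ ((13:ℝ)/8) := mul_nonneg hb.le hr3
        calc b * (θ ^ m / r) ^ ((13:ℝ)/8) * (1 + g ^ ((2:ℝ)/3))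
            ≤ (b * θ⁻¹ ^ ((13:ℝ)/8)) * (1 + B ^ ((2:ℝ)/3)) :=
              mul_le_mul hr5 (by linarith) hr4 (le_trans hr6 hr5)
        _ = C * (1 + B ^ ((2:ℝ)/3)) := by rw [hCdef]
      have : f r ≤ a * B + C * (1 + B ^ ((2:ℝ)/3)) := by linarith
      exact le_trans this (le_max_right _ _)
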